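/- Let M > 0, R₀ > 0 and δ > 0. There is a constant C > 0, depending only on M and R₀, such that for every integer j ≥ 1, every x ∈ ℝ³ with x ≠ 0, |x| ≤ R₀ and |x₃| ≤ M(x₁² + x₂²), and every i ∈ {1,2}, the tangential components of the gradient of the difference of the point-source kernels satisfy |∂_{x_i}(Φ₀(x, x_j) − Φ₀(x, y_j))| = (1/4π)·| 1/|x−y_j|³ − 1/|x−x_j|³ |·|x_i| ≤ C/|x|. -/

import Mathlib

noncomputable section

open Real

/-- Euclidean space `ℝ³`. -/
abbrev E3 := EuclideanSpace ℝ (Fin 3)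

/-- The fundamental solution `Φ₀(x,y) = 1/(4π|x−y|)` of the Laplacian in `ℝ³`. -/
def Phi0 (x y : E3) : ℝ := 1 / (4 * Real.pi * ‖x - y‖)

/-- The exterior source points `x_j = (0,0,δ/j)`. -/
def xj (δ : ℝ) (j : ℕ) : E3 := EuclideanSpace.single (2 : Fin 3) (δ / j)

/-- The interior source points `y_j = (0,0,−δ/j)`. -/
def yj (δ : ℝ) (j : ℕ) : E3 := EuclideanSpace.single (2 : Fin 3) (-(δ / j))

lemma hasFDerivAt_inv_norm (p x : E3) (hx : x ≠ p) :
    HasFDerivAt (fun z : E3 => ‖z - p‖⁻¹)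
      ((-(‖x - p‖ ^ 3)⁻¹) • innerSL ℝ (x - p)) x := by
  have hu : x - p ≠ 0 := sub_ne_zero.mpr hx
  have hnorm : (0:ℝ) < ‖x - p‖ := norm_pos_iff.mpr hu
  have h1 : HasFDerivAt (fun z : E3 => ‖z - p‖ ^ 2)
      ((2:ℝ) • (innerSL ℝ (x - p))) x := by
    have h := ((hasFDerivAt_id x).sub_const p).norm_sq
    refine h.congr_fderiv ?_
    ext v
    simp [two_smul]
  have hs : Real.sqrt (‖x - p‖ ^ 2) = ‖x - p‖ := Real.sqrt_sq (le_of_lt hnorm)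
  have h2 : HasDerivAt (fun t : ℝ => (Real.sqrt t)⁻¹)
      (-(1 / (2 * Real.sqrt (‖x - p‖ ^ 2))) / (Real.sqrt (‖x - p‖ ^ 2)) ^ 2)
      (‖x - p‖ ^ 2) :=
    (Real.hasDerivAt_sqrt (by positivity)).inv (by rw [hs]; exact ne_of_gt hnorm)
  have h3 := h2.comp_hasFDerivAt x h1
  have hfun : (fun z : E3 => ‖z - p‖⁻¹) = fun z : E3 => (Real.sqrt (‖z - p‖ ^ 2))⁻¹ := by
    funext z; rw [Real.sqrt_sq (norm_nonneg _)]
  rw [hfun]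
  refine h3.congr_fderiv ?_
  rw [smul_smul]
  congr 1
  rw [hs]
  field_simp

lemma hasFDerivAt_Phi0_diff (p q x : E3) (hp : x ≠ p) (hq : x ≠ q) :
    HasFDerivAt (fun z : E3 => Phi0 z p - Phi0 z q)
      (((4 * Real.pi)⁻¹ * -(‖x - p‖ ^ 3)⁻¹) • innerSL ℝ (x - p)
        - ((4 * Real.pi)⁻¹ * -(‖x - q‖ ^ 3)⁻¹) • innerSL ℝ (x - q)) x := by
  have hp' := (hasFDerivAt_inv_norm p x hp).const_mul ((4 * Real.pi)⁻¹)
  have hq' := (hasFDerivAt_inv_norm q x hq).const_mul ((4 * Real.pi)⁻¹)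
  have h := hp'.sub hq'
  have hfun : (fun z : E3 => Phi0 z p - Phi0 z q)
      = fun z : E3 => (4 * Real.pi)⁻¹ * ‖z - p‖⁻¹ - (4 * Real.pi)⁻¹ * ‖z - q‖⁻¹ := by
    funext z; simp [Phi0, one_div, mul_inv]; ring
  rw [hfun]
  refine h.congr_fderiv ?_
  rw [smul_smul, smul_smul]

set_option maxHeartbeats 2000000 in
/-- Let `M > 0`, `R₀ > 0` and `δ > 0`.  There is a constant `C > 0`,
depending only on `M` and `R₀`, such that for every integer `j ≥ 1`, every `x ∈ ℝ³` with
`x ≠ 0`, `|x| ≤ R₀` and `|x₃| ≤ M(x₁² + x₂²)`, and every tangential coordinate index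
`i ∈ {1,2}` (here indexed as `i : Fin 3` with `i ≠ 2`), one has
`|∂_{x_i}(Φ₀(x, x_j) − Φ₀(x, y_j))|
  = (1/4π)·|1/|x−y_j|³ − 1/|x−x_j|³|·|x_i| ≤ C/|x|`. -/
theorem tangential_derivative_difference_bound (M R₀ : ℝ) (hM : 0 < M) (hR₀ : 0 < R₀) :
    ∃ C > 0, ∀ δ : ℝ, 0 < δ → ∀ j : ℕ, 1 ≤ j → ∀ x : E3, x ≠ 0 → ‖x‖ ≤ R₀ →
      |x 2| ≤ M * ((x 0) ^ 2 + (x 1) ^ 2) → ∀ i : Fin 3, i ≠ 2 →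
      (|fderiv ℝ (fun z => Phi0 z (xj δ j) - Phi0 z (yj δ j)) x (EuclideanSpace.single i 1)|
          = (1 / (4 * Real.pi)) *
            |1 / ‖x - yj δ j‖ ^ 3 - 1 / ‖x - xj δ j‖ ^ 3| * |x i| ∧
        |fderiv ℝ (fun z => Phi0 z (xj δ j) - Phi0 z (yj δ j)) x (EuclideanSpace.single i 1)|
          ≤ C / ‖x‖) := by
  refine ⟨2 * M * Real.sqrt (1 + M ^ 2 * R₀ ^ 2), by positivity, ?_⟩
  intro δ hδ j hj x hx0 hxR hxM i hi
  set C := 2 * M * Real.sqrt (1 + M ^ 2 * R₀ ^ 2) with hC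
  have hjpos : (0:ℝ) < (j:ℝ) := by exact_mod_cast Nat.lt_of_lt_of_le Nat.zero_lt_one hj
  set h : ℝ := δ / j with hhdef
  have hh : 0 < h := div_pos hδ hjpos
  clear_value C h
  -- squared norms
  have hb2 : ‖x - xj δ j‖ ^ 2 = (x 0) ^ 2 + (x 1) ^ 2 + (x 2 - h) ^ 2 := by
    rw [PiLp.norm_sq_eq_of_L2]
    simp [Fin.sum_univ_three, xj, EuclideanSpace.single_apply, PiLp.sub_apply,
      Real.norm_eq_abs, sq_abs, hhdef]
  have ha2 : ‖x - yj δ j‖ ^ 2 = (x 0) ^ 2 + (x 1) ^ 2 + (x 2 + h) ^ 2 := by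
    rw [PiLp.norm_sq_eq_of_L2]
    simp [Fin.sum_univ_three, yj, EuclideanSpace.single_apply, PiLp.sub_apply,
      Real.norm_eq_abs, sq_abs, hhdef, sub_neg_eq_add]
  -- r > 0
  have hr2 : 0 < (x 0) ^ 2 + (x 1) ^ 2 := by
    rcases lt_or_eq_of_le (by positivity : (0:ℝ) ≤ (x 0) ^ 2 + (x 1) ^ 2) with h' | h'
    · exact h'
    · exfalso
      have h0 : x 0 = 0 := by nlinarith [sq_nonneg (x 0), sq_nonneg (x 1)]
      have h1 : x 1 = 0 := by nlinarith [sq_nonneg (x 0), sq_nonneg (x 1)]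
      have h2 : x 2 = 0 := by
        have hthis := hxM
        rw [← h'] at hthis
        have : |x 2| ≤ 0 := by simpa using hthis
        simpa [abs_nonpos_iff] using this
      apply hx0
      ext k
      fin_cases k <;> simp [h0, h1, h2]
  set r : ℝ := Real.sqrt ((x 0) ^ 2 + (x 1) ^ 2) with hrdef
  have hrsq : r ^ 2 = (x 0) ^ 2 + (x 1) ^ 2 := Real.sq_sqrt hr2.le
  have hr : 0 < r := Real.sqrt_pos.mpr hr2
  clear_value r
  set a : ℝ := ‖x - yj δ j‖ with hadef
  set b : ℝ := ‖x - xj δ j‖ with hbdef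
  have ha0 : 0 ≤ a := hadef ▸ norm_nonneg _
  have hb0 : 0 ≤ b := hbdef ▸ norm_nonneg _
  clear_value a b
  have ha : 0 < a := by nlinarith [sq_nonneg (x 2 + h)]
  have hb : 0 < b := by nlinarith [sq_nonneg (x 2 - h)]
  have hxp : x ≠ xj δ j := by
    have : (0:ℝ) < ‖x - xj δ j‖ := hbdef ▸ hb
    exact sub_ne_zero.mp (norm_pos_iff.mp this)
  have hxq : x ≠ yj δ j := by
    have : (0:ℝ) < ‖x - yj δ j‖ := hadef ▸ ha
    exact sub_ne_zero.mp (norm_pos_iff.mp this)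
  -- fderiv computation
  have hF := (hasFDerivAt_Phi0_diff (xj δ j) (yj δ j) x hxp hxq).fderiv
  have hxi : (x - xj δ j) i = x i := by
    simp [xj, EuclideanSpace.single_apply, PiLp.sub_apply, hi]
  have hyi : (x - yj δ j) i = x i := by
    simp [yj, EuclideanSpace.single_apply, PiLp.sub_apply, hi]
  have hval : fderiv ℝ (fun z => Phi0 z (xj δ j) - Phi0 z (yj δ j)) x
      (EuclideanSpace.single i 1)
      = (1 / (4 * Real.pi)) * (1 / a ^ 3 - 1 / b ^ 3) * x i := by
    rw [hadef, hbdef, hF]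
    simp only [ContinuousLinearMap.sub_apply, ContinuousLinearMap.smul_apply,
      innerSL_apply_apply, smul_eq_mul]
    rw [EuclideanSpace.inner_single_right, EuclideanSpace.inner_single_right]
    simp only [RCLike.conj_to_real, starRingEnd_apply, star_trivial, one_mul, hxi, hyi,
      ← hadef, ← hbdef]
    field_simp
    ring
  have habs : |fderiv ℝ (fun z => Phi0 z (xj δ j) - Phi0 z (yj δ j)) x
      (EuclideanSpace.single i 1)|
      = (1 / (4 * Real.pi)) * |1 / a ^ 3 - 1 / b ^ 3| * |x i| := by
    rw [hval, abs_mul, abs_mul, abs_of_pos (by positivity : (0:ℝ) < 1 / (4 * Real.pi))]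
  refine ⟨habs, ?_⟩
  rw [habs]
  clear hF hval habs hxi hyi hxp hxq hadef hbdef
  -- geometric estimates
  have hra : r ≤ a := by nlinarith [sq_nonneg (x 2 + h)]
  have hrb : r ≤ b := by nlinarith [sq_nonneg (x 2 - h)]
  have haz : |x 2 + h| ≤ a := by
    rw [← Real.sqrt_sq ha.le, ← Real.sqrt_sq_eq_abs]
    apply Real.sqrt_le_sqrt; nlinarith
  have hbz : |x 2 - h| ≤ b := by
    rw [← Real.sqrt_sq hb.le, ← Real.sqrt_sq_eq_abs]
    apply Real.sqrt_le_sqrt; nlinarith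
  have h2ab : 2 * h ≤ a + b := by
    have := le_abs_self (x 2 + h)
    have := neg_abs_le (x 2 - h)
    linarith
  have hxM' : |x 2| ≤ M * r ^ 2 := by rw [hrsq]; exact hxM
  have hab : |a - b| ≤ 2 * M * r ^ 2 := by
    have hd : a ^ 2 - b ^ 2 = 4 * x 2 * h := by rw [ha2, hb2]; ring
    have key : |a - b| * (a + b) = 4 * |x 2| * h := by
      rw [← abs_of_pos (show (0:ℝ) < a + b by linarith), ← abs_mul]
      rw [show (a - b) * (a + b) = 4 * x 2 * h by nlinarith]
      rw [abs_mul, abs_mul]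
      rw [abs_of_pos hh, abs_of_nonneg (by norm_num : (0:ℝ) ≤ 4)]
    have hMx : 0 ≤ M * r ^ 2 := by positivity
    have step : |a - b| * (a + b) ≤ (2 * M * r ^ 2) * (a + b) := by
      rw [key]
      have h1 : 4 * |x 2| * h ≤ 4 * (M * r ^ 2) * h := by nlinarith
      have h2 : 4 * (M * r ^ 2) * h = (2 * M * r ^ 2) * (2 * h) := by ring
      nlinarith
    exact le_of_mul_le_mul_right step (by linarith)
  have hxir : |x i| ≤ r := by
    have hv : i = 0 ∨ i = 1 := by
      have h3 : (i : ℕ) < 3 := i.isLt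
      have h2' : (i : ℕ) ≠ 2 := fun hc => hi (Fin.ext hc)
      have : (i : ℕ) = 0 ∨ (i : ℕ) = 1 := by omega
      rcases this with hv | hv
      · exact Or.inl (Fin.ext hv)
      · exact Or.inr (Fin.ext hv)
    have : (x i) ^ 2 ≤ r ^ 2 := by
      rw [hrsq]
      rcases hv with hv | hv <;> rw [hv]
      · nlinarith [sq_nonneg (x 1)]
      · nlinarith [sq_nonneg (x 0)]
    nlinarith [abs_nonneg (x i), sq_abs (x i)]
  -- cube estimate
  have hcube : |1 / a ^ 3 - 1 / b ^ 3|
      = |a - b| * (a ^ 2 + a * b + b ^ 2) / (a ^ 3 * b ^ 3) := by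
    have h1 : 1 / a ^ 3 - 1 / b ^ 3 = ((b - a) * (a ^ 2 + a * b + b ^ 2)) / (a ^ 3 * b ^ 3) := by
      field_simp; ring
    rw [h1, abs_div, abs_mul, abs_of_pos (by positivity : (0:ℝ) < a ^ 3 * b ^ 3),
      abs_of_pos (by positivity : (0:ℝ) < a ^ 2 + a * b + b ^ 2), abs_sub_comm]
  have hmain : |1 / a ^ 3 - 1 / b ^ 3| * |x i| ≤ 6 * M / r := by
    rw [hcube, div_mul_eq_mul_div, div_le_div_iff₀ (by positivity) hr]
    have e1 : r ^ 4 ≤ a * b ^ 3 := by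
      calc r ^ 4 = r * r ^ 3 := by ring
        _ ≤ a * b ^ 3 := mul_le_mul hra (pow_le_pow_left₀ hr.le hrb 3) (by positivity) ha.le
    have e2 : r ^ 4 ≤ a ^ 2 * b ^ 2 := by nlinarith [mul_le_mul hra hrb hr.le ha.le]
    have e3 : r ^ 4 ≤ a ^ 3 * b := by
      calc r ^ 4 = r ^ 3 * r := by ring
        _ ≤ a ^ 3 * b := mul_le_mul (pow_le_pow_left₀ hr.le hra 3) hrb hr.le (by positivity)
    have f1 : r ^ 4 * a ^ 2 ≤ (a * b ^ 3) * a ^ 2 :=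
      mul_le_mul_of_nonneg_right e1 (sq_nonneg a)
    have f2 : r ^ 4 * (a * b) ≤ (a ^ 2 * b ^ 2) * (a * b) :=
      mul_le_mul_of_nonneg_right e2 (by positivity)
    have f3 : r ^ 4 * b ^ 2 ≤ (a ^ 3 * b) * b ^ 2 :=
      mul_le_mul_of_nonneg_right e3 (sq_nonneg b)
    have hS : 0 < a ^ 2 + a * b + b ^ 2 := by positivity
    have g1 : |a - b| * (a ^ 2 + a * b + b ^ 2) * |x i| * r
        ≤ (2 * M * r ^ 2) * (a ^ 2 + a * b + b ^ 2) * r * r := by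
      have : |a - b| * (a ^ 2 + a * b + b ^ 2) * |x i|
          ≤ (2 * M * r ^ 2) * (a ^ 2 + a * b + b ^ 2) * r := by
        apply mul_le_mul _ hxir (abs_nonneg _) (by positivity)
        exact mul_le_mul_of_nonneg_right hab hS.le
      exact mul_le_mul_of_nonneg_right this hr.le
    have g2 : (2 * M * r ^ 2) * (a ^ 2 + a * b + b ^ 2) * r * r
        ≤ 6 * M * (a ^ 3 * b ^ 3) := by nlinarith [f1, f2, f3]
    linarith
  -- norm comparison
  have hx2n : ‖x‖ ^ 2 = r ^ 2 + (x 2) ^ 2 := by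
    rw [PiLp.norm_sq_eq_of_L2, hrsq]
    simp [Fin.sum_univ_three, Real.norm_eq_abs, sq_abs]
  have hxpos : 0 < ‖x‖ := norm_pos_iff.mpr hx0
  have hrx : r ≤ ‖x‖ := by nlinarith [sq_nonneg (x 2), norm_nonneg x]
  set s : ℝ := Real.sqrt (1 + M ^ 2 * R₀ ^ 2) with hsdef
  have hssq : s ^ 2 = 1 + M ^ 2 * R₀ ^ 2 := Real.sq_sqrt (by positivity)
  have hs0 : 0 < s := Real.sqrt_pos.mpr (by positivity)
  clear_value s
  have hxs : ‖x‖ ≤ r * s := by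
    have hx22 : (x 2) ^ 2 ≤ M ^ 2 * r ^ 4 := by nlinarith [abs_nonneg (x 2), sq_abs (x 2)]
    have hrR : r ≤ R₀ := le_trans hrx hxR
    have hr2R : r ^ 2 ≤ R₀ ^ 2 := by nlinarith
    have hkey : M ^ 2 * r ^ 4 ≤ M ^ 2 * R₀ ^ 2 * r ^ 2 := by
      have := mul_le_mul_of_nonneg_left hr2R (by positivity : (0:ℝ) ≤ M ^ 2 * r ^ 2)
      nlinarith [this]
    have hsq : ‖x‖ ^ 2 ≤ (r * s) ^ 2 := by
      have hexp : (r * s) ^ 2 = r ^ 2 + M ^ 2 * R₀ ^ 2 * r ^ 2 := by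
        have h' : (r * s) ^ 2 = r ^ 2 * s ^ 2 := by ring
        rw [h', hssq]; ring
      rw [hx2n, hexp]
      linarith [hx22, hkey]
    calc ‖x‖ = Real.sqrt (‖x‖ ^ 2) := (Real.sqrt_sq (norm_nonneg x)).symm
      _ ≤ Real.sqrt ((r * s) ^ 2) := Real.sqrt_le_sqrt hsq
      _ = r * s := Real.sqrt_sq (by positivity)
  -- final
  have hfin : (1 / (4 * Real.pi)) * (6 * M / r) ≤ C / ‖x‖ := by
    rw [le_div_iff₀ hxpos, hC]
    have hpi := Real.pi_gt_three
    have step1 : (1 / (4 * Real.pi)) * (6 * M / r) * ‖x‖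
        ≤ (1 / (4 * Real.pi)) * (6 * M / r) * (r * s) :=
      mul_le_mul_of_nonneg_left hxs (by positivity)
    have step2 : (1 / (4 * Real.pi)) * (6 * M / r) * (r * s) = (6 * M * s) / (4 * Real.pi) := by
      field_simp
    have step3 : (6 * M * s) / (4 * Real.pi) ≤ 2 * M * s := by
      rw [div_le_iff₀ (by positivity)]
      have hMs : 0 < M * s := mul_pos hM hs0
      have h8 : 0 ≤ M * s * (8 * Real.pi - 6) := mul_nonneg hMs.le (by linarith)
      have hre : 2 * M * s * (4 * Real.pi) = 6 * M * s + M * s * (8 * Real.pi - 6) := by ring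
      rw [hre]
      linarith [h8]
    linarith
  calc (1 / (4 * Real.pi)) * |1 / a ^ 3 - 1 / b ^ 3| * |x i|
      ≤ (1 / (4 * Real.pi)) * (6 * M / r) := by
        rw [mul_assoc]
        apply mul_le_mul_of_nonneg_left hmain (by positivity)
    _ ≤ C / ‖x‖ := hfin
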